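/- Assume that for every h ∈ G with h ≠ e, the unitary U_S(h) is not a complex scalar multiple of the identity 1_n. Let H_F be a Hermitian G×G matrix, H_S a Hermitian n×n matrix, set H := H_F ⊗ 1_n + 1_G ⊗ H_S (a non-interacting Hamiltonian), and fix frame orientations g_i, g_j ∈ G. Then there exist a G×G matrix A and an n×n matrix B with 𝐔 H 𝐔† = A ⊗ 1_n + 1_G ⊗ B (i.e. the system remains dynamically closed after the QRF transformation) if and only if H_F is diagonal in the group basis and H_S commutes with U_S(g) for all g ∈ G; and in that case 𝐔 H 𝐔† = (P H_F P†) ⊗ 1_n + 1_G ⊗ H_S, where P = P^{g_i,g_j} is the parity-swap unitary. -/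

import Mathlib

open Matrix Kronecker

variable {G : Type*} [Fintype G] [CommGroup G] [DecidableEq G] {n : ℕ}

/-- The QRF-transformation unitary `𝐔^{g_i,g_j} = Σ_g |g g_i⟩⟨g_j g⁻¹| ⊗ U_S(g)`. -/
noncomputable def Uqrf (U : G →* Matrix.unitaryGroup (Fin n) ℂ) (gi gj : G) :
    Matrix (G × Fin n) (G × Fin n) ℂ :=
  ∑ g : G, Matrix.single (g * gi) (gj * g⁻¹) (1 : ℂ) ⊗ₖ
    (U g : Matrix (Fin n) (Fin n) ℂ)

/-- The parity-swap unitary `P^{g_i,g_j} = Σ_g |g_i g⟩⟨g_j g⁻¹|` on `ℂ^G`. -/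
noncomputable def Pswap (gi gj : G) : Matrix G G ℂ :=
  ∑ g : G, Matrix.single (gi * g) (gj * g⁻¹) (1 : ℂ)

set_option linter.unusedSectionVars false

lemma Uqrf_apply (U : G →* Matrix.unitaryGroup (Fin n) ℂ) (gi gj : G) (a c : G) (s u : Fin n) :
    Uqrf U gi gj (a, s) (c, u) =
      if gj * (gi * a⁻¹) = c then (U (a * gi⁻¹) : Matrix (Fin n) (Fin n) ℂ) s u else 0 := by
  classical
  rw [Uqrf, Matrix.sum_apply, Finset.sum_eq_single (a * gi⁻¹)]
  · simp [Matrix.kroneckerMap_apply, Matrix.single, _root_.mul_inv_rev, inv_inv,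
      inv_mul_cancel_right, mul_assoc, ite_mul]
  · intro g _ hg
    have hne : ¬ (g * gi = a) := fun h => hg (by rw [← h]; simp)
    simp [Matrix.kroneckerMap_apply, Matrix.single, hne]
  · intro h; exact absurd (Finset.mem_univ _) h

lemma UH_apply (U : G →* Matrix.unitaryGroup (Fin n) ℂ) (gi gj : G)
    (M : Matrix (G × Fin n) (G × Fin n) ℂ) (a d : G) (s : Fin n) (v : Fin n) :
    (Uqrf U gi gj * M) (a, s) (d, v) =
      ∑ u, (U (a * gi⁻¹) : Matrix (Fin n) (Fin n) ℂ) s u * M (gj * (gi * a⁻¹), u) (d, v) := by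
  classical
  rw [Matrix.mul_apply, Fintype.sum_prod_type, Finset.sum_eq_single (gj * (gi * a⁻¹))]
  · simp [Uqrf_apply]
  · intro c _ hc
    simp [Uqrf_apply, Ne.symm hc]
  · intro h; exact absurd (Finset.mem_univ _) h

lemma NUstar_apply (U : G →* Matrix.unitaryGroup (Fin n) ℂ) (gi gj : G)
    (M : Matrix (G × Fin n) (G × Fin n) ℂ) (c b : G) (u : Fin n) (t : Fin n) :
    (M * (Uqrf U gi gj)ᴴ) (c, u) (b, t) =
      ∑ v, M (c, u) (gj * (gi * b⁻¹), v) *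
        star ((U (b * gi⁻¹) : Matrix (Fin n) (Fin n) ℂ) t v) := by
  classical
  rw [Matrix.mul_apply, Fintype.sum_prod_type, Finset.sum_eq_single (gj * (gi * b⁻¹))]
  · simp [Matrix.conjTranspose_apply, Uqrf_apply]
  · intro d _ hd
    simp [Matrix.conjTranspose_apply, Uqrf_apply, Ne.symm hd]
  · intro h; exact absurd (Finset.mem_univ _) h

lemma coe_mul_conjT (U : G →* Matrix.unitaryGroup (Fin n) ℂ) (gi : G) (a b : G) :
    (U (a * gi⁻¹) : Matrix (Fin n) (Fin n) ℂ) *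
      (U (b * gi⁻¹) : Matrix (Fin n) (Fin n) ℂ)ᴴ =
      (U (a * b⁻¹) : Matrix (Fin n) (Fin n) ℂ) := by
  have h : (U (a * gi⁻¹) : Matrix (Fin n) (Fin n) ℂ) *
      (U (b * gi⁻¹) : Matrix (Fin n) (Fin n) ℂ)ᴴ =
      ((U (a * gi⁻¹) * (U (b * gi⁻¹))⁻¹ :
        Matrix.unitaryGroup (Fin n) ℂ) : Matrix (Fin n) (Fin n) ℂ) := rfl
  have h2 : U (a * gi⁻¹) * (U (b * gi⁻¹))⁻¹ = U (a * b⁻¹) := by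
    rw [← map_inv U, ← _root_.map_mul]
    congr 1
    group
  rw [h, h2]

lemma conjA (U : G →* Matrix.unitaryGroup (Fin n) ℂ) (gi gj : G)
    (HF : Matrix G G ℂ) (a b : G) (s t : Fin n) :
    (Uqrf U gi gj * (HF ⊗ₖ (1 : Matrix (Fin n) (Fin n) ℂ)) * (Uqrf U gi gj)ᴴ) (a, s) (b, t) =
      HF (gj * (gi * a⁻¹)) (gj * (gi * b⁻¹)) *
        (U (a * b⁻¹) : Matrix (Fin n) (Fin n) ℂ) s t := by
  classical
  rw [NUstar_apply]
  simp only [UH_apply, Matrix.kroneckerMap_apply, Matrix.one_apply]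
  rw [← coe_mul_conjT U gi a b, Matrix.mul_apply, Finset.mul_sum]
  refine Finset.sum_congr rfl fun v _ => ?_
  rw [Finset.sum_mul]
  rw [Finset.sum_eq_single v]
  · simp [Matrix.conjTranspose_apply]; ring
  · intro u _ hu; simp [hu]
  · intro h; exact absurd (Finset.mem_univ _) h

lemma conjB (U : G →* Matrix.unitaryGroup (Fin n) ℂ) (gi gj : G)
    (HS : Matrix (Fin n) (Fin n) ℂ) (a b : G) (s t : Fin n) :
    (Uqrf U gi gj * ((1 : Matrix G G ℂ) ⊗ₖ HS) * (Uqrf U gi gj)ᴴ) (a, s) (b, t) =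
      if a = b then
        ((U (a * gi⁻¹) : Matrix (Fin n) (Fin n) ℂ) * HS *
          (U (a * gi⁻¹) : Matrix (Fin n) (Fin n) ℂ)ᴴ) s t
      else 0 := by
  classical
  rw [NUstar_apply]
  simp only [UH_apply, Matrix.kroneckerMap_apply, Matrix.one_apply]
  have hiff : (gj * (gi * a⁻¹) = gj * (gi * b⁻¹)) ↔ a = b := by
    constructor
    · intro h; exact inv_injective (mul_left_cancel (mul_left_cancel h))
    · rintro rfl; rfl
  by_cases hab : a = b
  · subst hab
    simp only [if_pos rfl, hiff, one_mul]
    rw [Matrix.mul_apply]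
    refine Finset.sum_congr rfl fun v _ => ?_
    rw [Matrix.mul_apply, Matrix.conjTranspose_apply]
    simp
  · rw [if_neg hab]
    simp [hiff, hab]

lemma Pswap_apply (gi gj : G) (a c : G) :
    Pswap gi gj a c = if gj * (gi * a⁻¹) = c then (1 : ℂ) else 0 := by
  classical
  rw [Pswap, Matrix.sum_apply, Finset.sum_eq_single (gi⁻¹ * a)]
  · simp [Matrix.single, _root_.mul_inv_rev, inv_inv, mul_assoc, mul_comm, mul_left_comm]
  · intro g _ hg
    have hne : ¬ (gi * g = a) := fun h => hg (by rw [← h]; simp)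
    simp [Matrix.single, hne]
  · intro h; exact absurd (Finset.mem_univ _) h

lemma PHP_apply (gi gj : G) (HF : Matrix G G ℂ) (a b : G) :
    (Pswap gi gj * HF * (Pswap gi gj)ᴴ) a b =
      HF (gj * (gi * a⁻¹)) (gj * (gi * b⁻¹)) := by
  classical
  rw [Matrix.mul_apply, Finset.sum_eq_single (gj * (gi * b⁻¹))]
  · rw [Matrix.conjTranspose_apply, Pswap_apply, if_pos rfl, star_one, mul_one,
      Matrix.mul_apply, Finset.sum_eq_single (gj * (gi * a⁻¹))]
    · rw [Pswap_apply, if_pos rfl, one_mul]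
    · intro c _ hc
      rw [Pswap_apply, if_neg (Ne.symm hc), zero_mul]
    · intro h; exact absurd (Finset.mem_univ _) h
  · intro d _ hd
    rw [Matrix.conjTranspose_apply, Pswap_apply, if_neg (Ne.symm hd), star_zero, mul_zero]
  · intro h; exact absurd (Finset.mem_univ _) h

lemma formula_lemma (U : G →* Matrix.unitaryGroup (Fin n) ℂ) (gi gj : G)
    (HF : Matrix G G ℂ) (HS : Matrix (Fin n) (Fin n) ℂ)
    (hdiag : ∀ g g' : G, g ≠ g' → HF g g' = 0)
    (hcomm : ∀ g : G, HS * (U g : Matrix (Fin n) (Fin n) ℂ) =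
      (U g : Matrix (Fin n) (Fin n) ℂ) * HS) :
    Uqrf U gi gj *
        (HF ⊗ₖ (1 : Matrix (Fin n) (Fin n) ℂ) + (1 : Matrix G G ℂ) ⊗ₖ HS) *
        (Uqrf U gi gj)ᴴ =
      (Pswap gi gj * HF * (Pswap gi gj)ᴴ) ⊗ₖ (1 : Matrix (Fin n) (Fin n) ℂ) +
        (1 : Matrix G G ℂ) ⊗ₖ HS := by
  classical
  rw [Matrix.mul_add, Matrix.add_mul]
  ext ⟨a, s⟩ ⟨b, t⟩
  rw [Matrix.add_apply, Matrix.add_apply, conjA, conjB,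
    Matrix.kroneckerMap_apply, Matrix.kroneckerMap_apply, PHP_apply]
  have hUU : (U (a * gi⁻¹) : Matrix (Fin n) (Fin n) ℂ) *
      (U (a * gi⁻¹) : Matrix (Fin n) (Fin n) ℂ)ᴴ = 1 := by
    rw [← Matrix.star_eq_conjTranspose]
    exact Unitary.mul_star_self_of_mem (U (a * gi⁻¹)).prop
  by_cases hab : a = b
  · subst hab
    have h1 : (U (a * a⁻¹) : Matrix (Fin n) (Fin n) ℂ) = 1 := by
      rw [mul_inv_cancel, _root_.map_one]; rfl
    have h2 : (U (a * gi⁻¹) : Matrix (Fin n) (Fin n) ℂ) * HS *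
        (U (a * gi⁻¹) : Matrix (Fin n) (Fin n) ℂ)ᴴ = HS := by
      rw [← hcomm, mul_assoc, hUU, mul_one]
    rw [if_pos rfl, h1, h2]
    simp
  · have hne : gj * (gi * a⁻¹) ≠ gj * (gi * b⁻¹) := by
      intro h
      exact hab (inv_injective (mul_left_cancel (mul_left_cancel h)))
    rw [if_neg hab, hdiag _ _ hne, zero_mul, Matrix.one_apply_ne hab]
    simp

lemma sigma_invol {G : Type*} [CommGroup G] (gi gj a : G) :
    gj * (gi * (gj * (gi * a⁻¹))⁻¹) = a := by
  rw [_root_.mul_inv_rev, _root_.mul_inv_rev, inv_inv]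
  have h : gj * (gi * (a * gi⁻¹ * gj⁻¹)) = (gj * gj⁻¹) * ((gi * gi⁻¹) * a) := by ac_rfl
  rw [h]; simp


/-- closed-to-closed and closed-to-open subsystem dynamics. Assuming no
nontrivial translation is a scalar, a non-interacting Hamiltonian
`H = H_F ⊗ 1 + 1 ⊗ H_S` stays non-interacting under the QRF transformation iff `H_F` is
diagonal in the group basis and `H_S` is translation-invariant; in that case
`𝐔 H 𝐔† = (P H_F P†) ⊗ 1 + 1 ⊗ H_S`. -/
theorem free_Hamiltonian_stays_free_iff (hn : 1 ≤ n)
    (U : G →* Matrix.unitaryGroup (Fin n) ℂ)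
    (hU : ∀ h : G, h ≠ 1 →
      ¬ ∃ c : ℂ, (U h : Matrix (Fin n) (Fin n) ℂ) = c • (1 : Matrix (Fin n) (Fin n) ℂ))
    (gi gj : G)
    (HF : Matrix G G ℂ) (hHF : HF.IsHermitian)
    (HS : Matrix (Fin n) (Fin n) ℂ) (hHS : HS.IsHermitian) :
    ((∃ A : Matrix G G ℂ, ∃ B : Matrix (Fin n) (Fin n) ℂ,
        Uqrf U gi gj *
            (HF ⊗ₖ (1 : Matrix (Fin n) (Fin n) ℂ) + (1 : Matrix G G ℂ) ⊗ₖ HS) *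
            (Uqrf U gi gj)ᴴ =
          A ⊗ₖ (1 : Matrix (Fin n) (Fin n) ℂ) + (1 : Matrix G G ℂ) ⊗ₖ B) ↔
      ((∀ g g' : G, g ≠ g' → HF g g' = 0) ∧
        (∀ g : G, HS * (U g : Matrix (Fin n) (Fin n) ℂ) =
          (U g : Matrix (Fin n) (Fin n) ℂ) * HS))) ∧
    (((∀ g g' : G, g ≠ g' → HF g g' = 0) ∧
        (∀ g : G, HS * (U g : Matrix (Fin n) (Fin n) ℂ) =
          (U g : Matrix (Fin n) (Fin n) ℂ) * HS)) →
      Uqrf U gi gj *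
          (HF ⊗ₖ (1 : Matrix (Fin n) (Fin n) ℂ) + (1 : Matrix G G ℂ) ⊗ₖ HS) *
          (Uqrf U gi gj)ᴴ =
        (Pswap gi gj * HF * (Pswap gi gj)ᴴ) ⊗ₖ (1 : Matrix (Fin n) (Fin n) ℂ) +
          (1 : Matrix G G ℂ) ⊗ₖ HS) := by
  classical
  refine ⟨⟨?_, fun h => ⟨Pswap gi gj * HF * (Pswap gi gj)ᴴ, HS,
      formula_lemma U gi gj HF HS h.1 h.2⟩⟩,
    fun h => formula_lemma U gi gj HF HS h.1 h.2⟩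
  rintro ⟨A, B, hX⟩
  rw [Matrix.mul_add, Matrix.add_mul] at hX
  have master : ∀ (a b : G) (s t : Fin n),
      HF (gj * (gi * a⁻¹)) (gj * (gi * b⁻¹)) *
          (U (a * b⁻¹) : Matrix (Fin n) (Fin n) ℂ) s t +
        (if a = b then
          ((U (a * gi⁻¹) : Matrix (Fin n) (Fin n) ℂ) * HS *
            (U (a * gi⁻¹) : Matrix (Fin n) (Fin n) ℂ)ᴴ) s t
        else 0) =
      A a b * (1 : Matrix (Fin n) (Fin n) ℂ) s t + (1 : Matrix G G ℂ) a b * B s t := by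
    intro a b s t
    have h := Matrix.ext_iff.mpr hX (a, s) (b, t)
    rwa [Matrix.add_apply, conjA, conjB, Matrix.add_apply,
      Matrix.kroneckerMap_apply, Matrix.kroneckerMap_apply] at h
  have hUgstar : ∀ g : G, (U g : Matrix (Fin n) (Fin n) ℂ)ᴴ *
      (U g : Matrix (Fin n) (Fin n) ℂ) = 1 := by
    intro g
    rw [← Matrix.star_eq_conjTranspose]
    exact Matrix.UnitaryGroup.star_mul_self (U g)
  constructor
  · -- diagonality
    intro g g' hgg'
    by_contra hF0
    set a : G := gj * (gi * g⁻¹) with ha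
    set b : G := gj * (gi * g'⁻¹) with hb
    have hsa : gj * (gi * a⁻¹) = g := by
      rw [ha]; exact sigma_invol gi gj g
    have hsb : gj * (gi * b⁻¹) = g' := by
      rw [hb]; exact sigma_invol gi gj g'
    have hab : a ≠ b := by
      intro h
      exact hgg' (inv_injective (mul_left_cancel (mul_left_cancel (ha ▸ hb ▸ h))))
    refine hU (a * b⁻¹) (fun h1 => hab (mul_inv_eq_one.mp h1)) ⟨A a b / HF g g', ?_⟩
    ext s t
    have h := master a b s t
    rw [if_neg hab, add_zero, hsa, hsb, Matrix.one_apply_ne hab, zero_mul, add_zero] at h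
    rw [Matrix.smul_apply, smul_eq_mul, div_mul_eq_mul_div, eq_div_iff hF0]
    linear_combination h
  · -- translation invariance
    intro g
    have key : ∀ a : G, (U (a * gi⁻¹) : Matrix (Fin n) (Fin n) ℂ) * HS *
        (U (a * gi⁻¹) : Matrix (Fin n) (Fin n) ℂ)ᴴ =
        B + (A a a - HF (gj * (gi * a⁻¹)) (gj * (gi * a⁻¹))) • 1 := by
      intro a
      ext s t
      have h := master a a s t
      have h1 : (U (a * a⁻¹) : Matrix (Fin n) (Fin n) ℂ) = 1 := by
        rw [mul_inv_cancel, _root_.map_one]; rfl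
      rw [if_pos rfl, h1, Matrix.one_apply_eq, one_mul] at h
      simp only [Matrix.add_apply, Matrix.smul_apply, smul_eq_mul, Matrix.sub_apply]
      linear_combination h
    have k1 := key (g * gi)
    rw [mul_inv_cancel_right] at k1
    have k0 := key gi
    have h1 : (U (gi * gi⁻¹) : Matrix (Fin n) (Fin n) ℂ) = 1 := by
      rw [mul_inv_cancel, _root_.map_one]; rfl
    rw [h1, Matrix.one_mul, Matrix.conjTranspose_one, Matrix.mul_one] at k0
    obtain ⟨c1, k1⟩ : ∃ c : ℂ, (U g : Matrix (Fin n) (Fin n) ℂ) * HS *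
        (U g : Matrix (Fin n) (Fin n) ℂ)ᴴ = B + c • 1 := ⟨_, k1⟩
    obtain ⟨c0, k0⟩ : ∃ c : ℂ, HS = B + c • 1 := ⟨_, k0⟩
    have k2 : (U g : Matrix (Fin n) (Fin n) ℂ) * HS *
        (U g : Matrix (Fin n) (Fin n) ℂ)ᴴ = HS + (c1 - c0) • 1 := by
      rw [k1, k0, sub_smul]
      abel
    have htr := congrArg Matrix.trace k2
    have htr2 : Matrix.trace ((U g : Matrix (Fin n) (Fin n) ℂ) * HS *
        (U g : Matrix (Fin n) (Fin n) ℂ)ᴴ) = Matrix.trace HS := by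
      rw [Matrix.trace_mul_cycle, hUgstar, Matrix.one_mul]
    rw [htr2, Matrix.trace_add, Matrix.trace_smul, Matrix.trace_one] at htr
    simp only [Fintype.card_fin, smul_eq_mul] at htr
    have hn0 : (n : ℂ) ≠ 0 := Nat.cast_ne_zero.mpr (by omega)
    have hd0 : c1 - c0 = 0 := by
      have h3 : (c1 - c0) * n = 0 := by linear_combination -htr
      exact (mul_eq_zero.mp h3).resolve_right hn0
    rw [hd0, zero_smul, add_zero] at k2
    have e1 : (U g : Matrix (Fin n) (Fin n) ℂ) * HS *
        ((U g : Matrix (Fin n) (Fin n) ℂ)ᴴ * (U g : Matrix (Fin n) (Fin n) ℂ)) =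
        HS * (U g : Matrix (Fin n) (Fin n) ℂ) := by
      rw [← Matrix.mul_assoc, k2]
    rw [hUgstar, Matrix.mul_one] at e1
    exact e1.symm
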